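/- Let S be a commutative semiring and H a Hopf S-semialgebra. Then H admits a normalized left integral in H (x ∈ H with h·x = ε(h)·x for all h ∈ H and ε(x) = 1_S) if and only if H admits a normalized right integral in H (y ∈ H with y·h = ε(h)·y for all h ∈ H and ε(y) = 1_S). -/

import Mathlib

open Coalgebra HopfAlgebra TensorProduct

section Helpers

variable {S : Type*} [CommSemiring S] {H : Type*} [Semiring H] [HopfAlgebra S H]

/-- The product of two comultiplication representations represents the product. -/
noncomputable def Coalgebra.Repr.mulRepr {ι κ : Type*} {c d : H} (rc : Coalgebra.Repr S c ι)
    (rd : Coalgebra.Repr S d κ) : Coalgebra.Repr S (c * d) (ι × κ) where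
  index := rc.index ×ˢ rd.index
  left p := rc.left p.1 * rd.left p.2
  right p := rc.right p.1 * rd.right p.2
  eq := by
    rw [Bialgebra.comul_mul, ← rc.eq, ← rd.eq, Finset.sum_mul_sum, Finset.sum_product]
    simp [Algebra.TensorProduct.tmul_mul_tmul]

lemma sum_counit_right_smul_left {ι : Type*} {c : H} (rc : Coalgebra.Repr S c ι) :
    ∑ i ∈ rc.index, counit (R := S) (rc.right i) • rc.left i = c := by
  have h2 := congrArg (TensorProduct.rid S H) (Coalgebra.sum_tmul_counit_eq rc)
  simp only [map_sum, TensorProduct.rid_tmul, one_smul] at h2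
  exact h2

lemma sum_counit_left_smul_right {ι : Type*} {c : H} (rc : Coalgebra.Repr S c ι) :
    ∑ i ∈ rc.index, counit (R := S) (rc.left i) • rc.right i = c := by
  have h2 := congrArg (TensorProduct.lid S H) (Coalgebra.sum_counit_tmul_eq rc)
  simp only [map_sum, TensorProduct.lid_tmul, one_smul] at h2
  exact h2

lemma collapse_LA {ι : Type*} {c : H} (rc : Coalgebra.Repr S c ι) (Y : H) :
    ∑ l ∈ rc.index, rc.left l * (antipode (R := S) (rc.right l) * Y) =
      counit (R := S) c • Y := by
  calc ∑ l ∈ rc.index, rc.left l * (antipode (R := S) (rc.right l) * Y)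
      = (∑ l ∈ rc.index, rc.left l * antipode (R := S) (rc.right l)) * Y := by
        rw [Finset.sum_mul]; simp [mul_assoc]
    _ = (counit (R := S) c • (1 : H)) * Y := by rw [sum_mul_antipode_eq_smul]
    _ = counit (R := S) c • Y := by rw [smul_mul_assoc, one_mul]

lemma coassoc_swap {ι κ Λ : Type*} {c : H} (rc : Coalgebra.Repr S c ι)
    (r1 : ∀ i, Coalgebra.Repr S (rc.left i) κ) (r2 : ∀ i, Coalgebra.Repr S (rc.right i) Λ)
    (C D E : H) :
    ∑ i ∈ rc.index, ∑ k ∈ (r2 i).index,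
      antipode (R := S) (rc.left i * C) *
        (((r2 i).left k * D) * (E * antipode (R := S) ((r2 i).right k)))
    = ∑ i ∈ rc.index, ∑ k ∈ (r1 i).index,
      antipode (R := S) ((r1 i).left k * C) *
        (((r1 i).right k * D) * (E * antipode (R := S) (rc.right i))) := by
  have h := Coalgebra.sum_tmul_tmul_eq rc r1 r2
  let Φ : H ⊗[S] (H ⊗[S] H) →ₗ[S] H :=
    LinearMap.mul' S H ∘ₗ
      TensorProduct.map (antipode (R := S) ∘ₗ LinearMap.mulRight S C)
        (LinearMap.mul' S H ∘ₗ
          TensorProduct.map (LinearMap.mulRight S D)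
            (LinearMap.mulLeft S E ∘ₗ antipode (R := S)))
  have h2 := congrArg Φ h
  simp only [map_sum, Φ, LinearMap.coe_comp, Function.comp_apply, TensorProduct.map_tmul,
    LinearMap.mul'_apply, LinearMap.mulRight_apply, LinearMap.mulLeft_apply] at h2
  exact h2.symm

lemma coassoc_swap' {ι κ Λ : Type*} {c : H} (rc : Coalgebra.Repr S c ι)
    (r1 : ∀ i, Coalgebra.Repr S (rc.left i) κ) (r2 : ∀ i, Coalgebra.Repr S (rc.right i) Λ)
    (P R T : H) :
    ∑ i ∈ rc.index, ∑ l ∈ (r2 i).index,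
      antipode (R := S) (P * rc.left i) *
        ((R * (r2 i).left l) * (antipode (R := S) ((r2 i).right l) * T))
    = ∑ i ∈ rc.index, ∑ l ∈ (r1 i).index,
      antipode (R := S) (P * (r1 i).left l) *
        ((R * (r1 i).right l) * (antipode (R := S) (rc.right i) * T)) := by
  have h := Coalgebra.sum_tmul_tmul_eq rc r1 r2
  let Φ : H ⊗[S] (H ⊗[S] H) →ₗ[S] H :=
    LinearMap.mul' S H ∘ₗ
      TensorProduct.map (antipode (R := S) ∘ₗ LinearMap.mulLeft S P)
        (LinearMap.mul' S H ∘ₗ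
          TensorProduct.map (LinearMap.mulLeft S R)
            (LinearMap.mulRight S T ∘ₗ antipode (R := S)))
  have h2 := congrArg Φ h
  simp only [map_sum, Φ, LinearMap.coe_comp, Function.comp_apply, TensorProduct.map_tmul,
    LinearMap.mul'_apply, LinearMap.mulRight_apply, LinearMap.mulLeft_apply] at h2
  exact h2.symm

/-- Swap two independent pairs of nested sums. -/
lemma group_swap {α β γ δ M : Type*} [AddCommMonoid M]
    (A : Finset α) (B : Finset β) (K : α → Finset γ) (L : β → Finset δ)
    (f : α → γ → β → δ → M) :
    ∑ i ∈ A, ∑ k ∈ K i, ∑ j ∈ B, ∑ l ∈ L j, f i k j l =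
      ∑ j ∈ B, ∑ l ∈ L j, ∑ i ∈ A, ∑ k ∈ K i, f i k j l := by
  calc ∑ i ∈ A, ∑ k ∈ K i, ∑ j ∈ B, ∑ l ∈ L j, f i k j l
      = ∑ p ∈ A.sigma K, ∑ j ∈ B, ∑ l ∈ L j, f p.1 p.2 j l :=
        Finset.sum_sigma' A K _
    _ = ∑ p ∈ A.sigma K, ∑ q ∈ B.sigma L, f p.1 p.2 q.1 q.2 :=
        Finset.sum_congr rfl fun p _ => Finset.sum_sigma' B L _
    _ = ∑ q ∈ B.sigma L, ∑ p ∈ A.sigma K, f p.1 p.2 q.1 q.2 := Finset.sum_comm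
    _ = ∑ q ∈ B.sigma L, ∑ i ∈ A, ∑ k ∈ K i, f i k q.1 q.2 :=
        Finset.sum_congr rfl fun q _ =>
          (Finset.sum_sigma' A K (fun i k => f i k q.1 q.2)).symm
    _ = ∑ j ∈ B, ∑ l ∈ L j, ∑ i ∈ A, ∑ k ∈ K i, f i k j l :=
        (Finset.sum_sigma' B L (fun j l => ∑ i ∈ A, ∑ k ∈ K i, f i k j l)).symm

end Helpers

section AntipodeMul

variable {S : Type*} [CommSemiring S] {H : Type*} [Semiring H] [HopfAlgebra S H]

local notation "𝔞" => antipode (R := S) (A := H)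
local notation "ε" => counit (R := S) (A := H)

theorem antipode_mul_anti (a b : H) : 𝔞 (a * b) = 𝔞 b * 𝔞 a := by
  classical
  obtain ⟨ra⟩ : Nonempty (Coalgebra.Repr S a (H × H)) := ⟨Coalgebra.Repr.arbitrary S a⟩
  obtain ⟨rb⟩ : Nonempty (Coalgebra.Repr S b (H × H)) := ⟨Coalgebra.Repr.arbitrary S b⟩
  set r1a : ∀ i, Coalgebra.Repr S (ra.left i) (H × H) :=
    fun i => Coalgebra.Repr.arbitrary S _ with hr1a
  set r2a : ∀ i, Coalgebra.Repr S (ra.right i) (H × H) :=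
    fun i => Coalgebra.Repr.arbitrary S _ with hr2a
  set r1b : ∀ j, Coalgebra.Repr S (rb.left j) (H × H) :=
    fun j => Coalgebra.Repr.arbitrary S _ with hr1b
  set r2b : ∀ j, Coalgebra.Repr S (rb.right j) (H × H) :=
    fun j => Coalgebra.Repr.arbitrary S _ with hr2b
  -- Part 1 : the big sum E equals 𝔞 (a*b)
  have part1 :
      (∑ i ∈ ra.index, ∑ j ∈ rb.index, ∑ k ∈ (r2a i).index, ∑ l ∈ (r2b j).index,
        𝔞 (ra.left i * rb.left j) *
          (((r2a i).left k * (r2b j).left l) *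
            (𝔞 ((r2b j).right l) * 𝔞 ((r2a i).right k))))
      = 𝔞 (a * b) := by
    have step1 : ∀ i ∈ ra.index, ∀ j ∈ rb.index,
        (∑ k ∈ (r2a i).index, ∑ l ∈ (r2b j).index,
          𝔞 (ra.left i * rb.left j) *
            (((r2a i).left k * (r2b j).left l) *
              (𝔞 ((r2b j).right l) * 𝔞 ((r2a i).right k))))
        = (ε (ra.right i) * ε (rb.right j)) • 𝔞 (ra.left i * rb.left j) := by
      intro i _ j _
      have inner : ∀ k ∈ (r2a i).index,
          (∑ l ∈ (r2b j).index,
            𝔞 (ra.left i * rb.left j) *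
              (((r2a i).left k * (r2b j).left l) *
                (𝔞 ((r2b j).right l) * 𝔞 ((r2a i).right k))))
          = ε (rb.right j) •
              (𝔞 (ra.left i * rb.left j) * ((r2a i).left k * 𝔞 ((r2a i).right k))) := by
        intro k _
        simp only [mul_assoc]
        rw [← Finset.mul_sum, ← Finset.mul_sum,
          collapse_LA (r2b j) (𝔞 ((r2a i).right k)), mul_smul_comm, mul_smul_comm]
      rw [Finset.sum_congr rfl inner, ← Finset.smul_sum, ← Finset.mul_sum,
        sum_mul_antipode_eq_smul (r2a i), mul_smul_comm, smul_smul, mul_one, mul_comm]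
    rw [Finset.sum_congr rfl (fun i hi => Finset.sum_congr rfl (step1 i hi))]
    have hab : a * b =
        (∑ i ∈ ra.index, ε (ra.right i) • ra.left i) *
          (∑ j ∈ rb.index, ε (rb.right j) • rb.left j) := by
      rw [sum_counit_right_smul_left, sum_counit_right_smul_left]
    rw [hab, Finset.sum_mul_sum, map_sum]
    refine Finset.sum_congr rfl fun i _ => ?_
    rw [map_sum]
    refine Finset.sum_congr rfl fun j _ => ?_
    rw [smul_mul_smul_comm, map_smul]
  -- Part 2 : the big sum E equals 𝔞 b * 𝔞 a
  have part2 :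
      (∑ i ∈ ra.index, ∑ j ∈ rb.index, ∑ k ∈ (r2a i).index, ∑ l ∈ (r2b j).index,
        𝔞 (ra.left i * rb.left j) *
          (((r2a i).left k * (r2b j).left l) *
            (𝔞 ((r2b j).right l) * 𝔞 ((r2a i).right k))))
      = 𝔞 b * 𝔞 a := by
    have aswap : ∀ j ∈ rb.index, ∀ l ∈ (r2b j).index,
        (∑ i ∈ ra.index, ∑ k ∈ (r2a i).index,
          𝔞 (ra.left i * rb.left j) *
            (((r2a i).left k * (r2b j).left l) *
              (𝔞 ((r2b j).right l) * 𝔞 ((r2a i).right k))))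
        = ∑ i ∈ ra.index, ∑ k ∈ (r1a i).index,
            𝔞 ((r1a i).left k * rb.left j) *
              (((r1a i).right k * (r2b j).left l) *
                (𝔞 ((r2b j).right l) * 𝔞 (ra.right i))) := by
      intro j _ l _
      exact coassoc_swap ra r1a r2a (rb.left j) ((r2b j).left l) (𝔞 ((r2b j).right l))
    have bswap : ∀ i ∈ ra.index, ∀ k ∈ (r1a i).index,
        (∑ j ∈ rb.index, ∑ l ∈ (r2b j).index,
          𝔞 ((r1a i).left k * rb.left j) *
            (((r1a i).right k * (r2b j).left l) *
              (𝔞 ((r2b j).right l) * 𝔞 (ra.right i))))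
        = ∑ j ∈ rb.index, ∑ l ∈ (r1b j).index,
            𝔞 ((r1a i).left k * (r1b j).left l) *
              (((r1a i).right k * (r1b j).right l) *
                (𝔞 (rb.right j) * 𝔞 (ra.right i))) := by
      intro i _ k _
      exact coassoc_swap' rb r1b r2b ((r1a i).left k) ((r1a i).right k) (𝔞 (ra.right i))
    have step2 : ∀ i ∈ ra.index, ∀ j ∈ rb.index,
        (∑ k ∈ (r1a i).index, ∑ l ∈ (r1b j).index,
          𝔞 ((r1a i).left k * (r1b j).left l) *
            (((r1a i).right k * (r1b j).right l) *
              (𝔞 (rb.right j) * 𝔞 (ra.right i))))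
        = (ε (ra.left i) * ε (rb.left j)) • (𝔞 (rb.right j) * 𝔞 (ra.right i)) := by
      intro i _ j _
      have hprod := sum_antipode_mul_eq_smul (R := S) ((r1a i).mulRepr (r1b j))
      rw [Coalgebra.Repr.mulRepr] at hprod
      simp only [Finset.sum_product] at hprod
      calc (∑ k ∈ (r1a i).index, ∑ l ∈ (r1b j).index,
          𝔞 ((r1a i).left k * (r1b j).left l) *
            (((r1a i).right k * (r1b j).right l) *
              (𝔞 (rb.right j) * 𝔞 (ra.right i))))
          = (∑ k ∈ (r1a i).index, ∑ l ∈ (r1b j).index,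
              𝔞 ((r1a i).left k * (r1b j).left l) *
                ((r1a i).right k * (r1b j).right l)) *
              (𝔞 (rb.right j) * 𝔞 (ra.right i)) := by
            rw [Finset.sum_mul]
            refine Finset.sum_congr rfl fun k _ => ?_
            rw [Finset.sum_mul]
            exact Finset.sum_congr rfl fun l _ => (mul_assoc _ _ _).symm
        _ = (ε (ra.left i * rb.left j) • (1 : H)) * (𝔞 (rb.right j) * 𝔞 (ra.right i)) := by
            rw [hprod]
        _ = (ε (ra.left i) * ε (rb.left j)) • (𝔞 (rb.right j) * 𝔞 (ra.right i)) := by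
            rw [Bialgebra.counit_mul, smul_mul_assoc, one_mul]
    have hb : 𝔞 b = ∑ j ∈ rb.index, ε (rb.left j) • 𝔞 (rb.right j) := by
      conv_lhs => rw [← sum_counit_left_smul_right rb]
      rw [map_sum]
      exact Finset.sum_congr rfl fun j _ => (map_smul _ _ _)
    have ha : 𝔞 a = ∑ i ∈ ra.index, ε (ra.left i) • 𝔞 (ra.right i) := by
      conv_lhs => rw [← sum_counit_left_smul_right ra]
      rw [map_sum]
      exact Finset.sum_congr rfl fun i _ => (map_smul _ _ _)
    calc (∑ i ∈ ra.index, ∑ j ∈ rb.index, ∑ k ∈ (r2a i).index, ∑ l ∈ (r2b j).index,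
        𝔞 (ra.left i * rb.left j) *
          (((r2a i).left k * (r2b j).left l) *
            (𝔞 ((r2b j).right l) * 𝔞 ((r2a i).right k))))
        = ∑ i ∈ ra.index, ∑ k ∈ (r2a i).index, ∑ j ∈ rb.index, ∑ l ∈ (r2b j).index,
            𝔞 (ra.left i * rb.left j) *
              (((r2a i).left k * (r2b j).left l) *
                (𝔞 ((r2b j).right l) * 𝔞 ((r2a i).right k))) :=
          Finset.sum_congr rfl fun i _ => Finset.sum_comm
      _ = ∑ j ∈ rb.index, ∑ l ∈ (r2b j).index, ∑ i ∈ ra.index, ∑ k ∈ (r2a i).index,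
            𝔞 (ra.left i * rb.left j) *
              (((r2a i).left k * (r2b j).left l) *
                (𝔞 ((r2b j).right l) * 𝔞 ((r2a i).right k))) :=
          group_swap ra.index rb.index (fun i => (r2a i).index) (fun j => (r2b j).index) _
      _ = ∑ j ∈ rb.index, ∑ l ∈ (r2b j).index, ∑ i ∈ ra.index, ∑ k ∈ (r1a i).index,
            𝔞 ((r1a i).left k * rb.left j) *
              (((r1a i).right k * (r2b j).left l) *
                (𝔞 ((r2b j).right l) * 𝔞 (ra.right i))) :=
          Finset.sum_congr rfl fun j hj => Finset.sum_congr rfl (aswap j hj)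
      _ = ∑ i ∈ ra.index, ∑ k ∈ (r1a i).index, ∑ j ∈ rb.index, ∑ l ∈ (r2b j).index,
            𝔞 ((r1a i).left k * rb.left j) *
              (((r1a i).right k * (r2b j).left l) *
                (𝔞 ((r2b j).right l) * 𝔞 (ra.right i))) :=
          group_swap rb.index ra.index (fun j => (r2b j).index) (fun i => (r1a i).index)
            (fun j l i k => 𝔞 ((r1a i).left k * rb.left j) *
              (((r1a i).right k * (r2b j).left l) *
                (𝔞 ((r2b j).right l) * 𝔞 (ra.right i))))
      _ = ∑ i ∈ ra.index, ∑ k ∈ (r1a i).index, ∑ j ∈ rb.index, ∑ l ∈ (r1b j).index,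
            𝔞 ((r1a i).left k * (r1b j).left l) *
              (((r1a i).right k * (r1b j).right l) *
                (𝔞 (rb.right j) * 𝔞 (ra.right i))) :=
          Finset.sum_congr rfl fun i hi => Finset.sum_congr rfl (bswap i hi)
      _ = ∑ i ∈ ra.index, ∑ j ∈ rb.index, ∑ k ∈ (r1a i).index, ∑ l ∈ (r1b j).index,
            𝔞 ((r1a i).left k * (r1b j).left l) *
              (((r1a i).right k * (r1b j).right l) *
                (𝔞 (rb.right j) * 𝔞 (ra.right i))) :=
          Finset.sum_congr rfl fun i _ => Finset.sum_comm
      _ = ∑ i ∈ ra.index, ∑ j ∈ rb.index,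
            (ε (ra.left i) * ε (rb.left j)) • (𝔞 (rb.right j) * 𝔞 (ra.right i)) :=
          Finset.sum_congr rfl fun i hi => Finset.sum_congr rfl (step2 i hi)
      _ = ∑ j ∈ rb.index, ∑ i ∈ ra.index,
            (ε (ra.left i) * ε (rb.left j)) • (𝔞 (rb.right j) * 𝔞 (ra.right i)) :=
          Finset.sum_comm
      _ = 𝔞 b * 𝔞 a := by
          rw [hb, ha, Finset.sum_mul_sum]
          refine Finset.sum_congr rfl fun j _ => Finset.sum_congr rfl fun i _ => ?_
          rw [smul_mul_smul_comm, mul_comm (ε (rb.left j)) (ε (ra.left i))]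
  rw [← part1, part2]

theorem counit_antipode' (c : H) : ε (𝔞 c) = ε c := by
  classical
  obtain ⟨rc⟩ : Nonempty (Coalgebra.Repr S c (H × H)) := ⟨Coalgebra.Repr.arbitrary S c⟩
  have h1 : ε (𝔞 c) = ∑ i ∈ rc.index, ε (rc.right i) * ε (𝔞 (rc.left i)) := by
    conv_lhs => rw [← sum_counit_right_smul_left rc]
    rw [map_sum, map_sum]
    refine Finset.sum_congr rfl fun i _ => ?_
    rw [map_smul, map_smul, smul_eq_mul]
  have h2 : ∑ i ∈ rc.index, ε (𝔞 (rc.left i)) * ε (rc.right i) = ε c := by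
    have := congrArg (counit (R := S) (A := H)) (sum_antipode_mul_eq_smul (R := S) rc)
    simp only [map_sum, Bialgebra.counit_mul, map_smul, smul_eq_mul] at this
    rw [this, Bialgebra.counit_one, mul_one]
  rw [h1, ← h2]
  exact Finset.sum_congr rfl fun i _ => mul_comm _ _

end AntipodeMul

theorem normalized_left_integral_iff_normalized_right_integral
    (S : Type*) [CommSemiring S] (H : Type*) [Semiring H] [HopfAlgebra S H] :
    (∃ x : H, (∀ h : H, h * x = Coalgebra.counit (R := S) h • x) ∧
        Coalgebra.counit (R := S) x = 1) ↔
      (∃ y : H, (∀ h : H, y * h = Coalgebra.counit (R := S) h • y) ∧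
        Coalgebra.counit (R := S) y = 1) := by
  classical
  constructor
  · rintro ⟨x, hint, hnorm⟩
    refine ⟨antipode (R := S) x, fun h => ?_, by rw [counit_antipode', hnorm]⟩
    obtain ⟨rh⟩ : Nonempty (Coalgebra.Repr S h (H × H)) := ⟨Coalgebra.Repr.arbitrary S h⟩
    calc antipode (R := S) x * h
        = antipode (R := S) x *
            ∑ i ∈ rh.index, Coalgebra.counit (R := S) (rh.left i) • rh.right i := by
          rw [sum_counit_left_smul_right]
      _ = ∑ i ∈ rh.index,
            antipode (R := S) (rh.left i * x) * rh.right i := by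
          rw [Finset.mul_sum]
          refine Finset.sum_congr rfl fun i _ => ?_
          rw [hint, map_smul, mul_smul_comm, smul_mul_assoc]
      _ = ∑ i ∈ rh.index,
            antipode (R := S) x * (antipode (R := S) (rh.left i) * rh.right i) := by
          refine Finset.sum_congr rfl fun i _ => ?_
          rw [antipode_mul_anti, mul_assoc]
      _ = antipode (R := S) x *
            ∑ i ∈ rh.index, antipode (R := S) (rh.left i) * rh.right i := by
          rw [Finset.mul_sum]
      _ = Coalgebra.counit (R := S) h • antipode (R := S) x := by
          rw [sum_antipode_mul_eq_smul rh, mul_smul_comm, mul_one]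
  · rintro ⟨y, hint, hnorm⟩
    refine ⟨antipode (R := S) y, fun h => ?_, by rw [counit_antipode', hnorm]⟩
    obtain ⟨rh⟩ : Nonempty (Coalgebra.Repr S h (H × H)) := ⟨Coalgebra.Repr.arbitrary S h⟩
    calc h * antipode (R := S) y
        = (∑ i ∈ rh.index, Coalgebra.counit (R := S) (rh.right i) • rh.left i) *
            antipode (R := S) y := by
          rw [sum_counit_right_smul_left]
      _ = ∑ i ∈ rh.index,
            rh.left i * antipode (R := S) (y * rh.right i) := by
          rw [Finset.sum_mul]
          refine Finset.sum_congr rfl fun i _ => ?_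
          rw [hint, map_smul, smul_mul_assoc, mul_smul_comm]
      _ = ∑ i ∈ rh.index,
            (rh.left i * antipode (R := S) (rh.right i)) * antipode (R := S) y := by
          refine Finset.sum_congr rfl fun i _ => ?_
          rw [antipode_mul_anti, mul_assoc]
      _ = Coalgebra.counit (R := S) h • antipode (R := S) y := by
          rw [← Finset.sum_mul, sum_mul_antipode_eq_smul rh, smul_mul_assoc, one_mul]
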